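/- Let q > 1 be a positive algebraic number and b ≥ 3 an integer with gcd(a,b) = 1, 1 ≤ a < b/2, and similarly 1 ≤ a' < b/2 with gcd(a',b) = 1 and a ≠ a'. Assuming Okada's linear independence of {cot(πa/b)} and Baker's theorem, the ratio [((q−1)/log q)·π·cot(πa/b) + (2q−3)(1/2 − a/b)] / [((q−1)/log q)·π·cot(πa'/b) + (2q−3)(1/2 − a'/b)] is irrational. -/

import Mathlib

open Polynomial

private lemma myAlgAdd {A : Type*} [Field A] [Algebra ℚ A] {x y : A}
    (hx : IsAlgebraic ℚ x) (hy : IsAlgebraic ℚ y) : IsAlgebraic ℚ (x + y) := by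
  rw [isAlgebraic_iff_isIntegral] at *
  exact hx.add hy

private lemma myAlgMul {A : Type*} [Field A] [Algebra ℚ A] {x y : A}
    (hx : IsAlgebraic ℚ x) (hy : IsAlgebraic ℚ y) : IsAlgebraic ℚ (x * y) := by
  rw [isAlgebraic_iff_isIntegral] at *
  exact hx.mul hy

private lemma myAlgSub {A : Type*} [Field A] [Algebra ℚ A] {x y : A}
    (hx : IsAlgebraic ℚ x) (hy : IsAlgebraic ℚ y) : IsAlgebraic ℚ (x - y) := by
  rw [isAlgebraic_iff_isIntegral] at *
  exact hx.sub hy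

private lemma myAlgDiv {A : Type*} [Field A] [Algebra ℚ A] {x y : A}
    (hx : IsAlgebraic ℚ x) (hy : IsAlgebraic ℚ y) : IsAlgebraic ℚ (x / y) := by
  rw [div_eq_mul_inv]
  exact myAlgMul hx hy.inv

private lemma real_alg_of_complex {x : ℝ} (h : IsAlgebraic ℚ (x : ℂ)) : IsAlgebraic ℚ x :=
  (isAlgebraic_algHom_iff ((Complex.ofRealAm).restrictScalars ℚ) Complex.ofReal_injective).mp h

private lemma cot_isAlgebraic (t b : ℕ) (hb : 0 < b) :
    IsAlgebraic ℚ (Real.cot (Real.pi * t / b)) := by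
  have hbC : (b : ℂ) ≠ 0 := Nat.cast_ne_zero.2 hb.ne'
  set θ : ℝ := Real.pi * t / b with hθ
  set z : ℂ := Complex.exp (θ * Complex.I) with hzdef
  have hz : z ^ (2 * b) = 1 := by
    rw [hzdef, ← Complex.exp_nat_mul]
    rw [show ((2 * b : ℕ) : ℂ) * ((θ : ℂ) * Complex.I)
        = (t : ℕ) * (2 * (Real.pi : ℂ) * Complex.I) by
      rw [hθ]; push_cast; field_simp]
    exact Complex.exp_nat_mul_two_pi_mul_I t
  have hzalg : IsAlgebraic ℚ z := by
    rw [isAlgebraic_iff_isIntegral]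
    refine ⟨X ^ (2 * b) - C 1, monic_X_pow_sub_C 1 (by omega), ?_⟩
    simp [hz]
  have hzinv : IsAlgebraic ℚ z⁻¹ := hzalg.inv
  have hIalg : IsAlgebraic ℚ Complex.I := by
    refine ⟨X ^ 2 + C 1, ?_, ?_⟩
    · intro h
      have := congrArg (Polynomial.eval 0) h
      simp at this
    · simp [Complex.I_sq]
  have hexp_neg : Complex.exp (-(θ : ℂ) * Complex.I) = z⁻¹ := by
    rw [hzdef, ← Complex.exp_neg]
    ring_nf
  have h2alg : IsAlgebraic ℚ (2 : ℂ) := by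
    have := isAlgebraic_nat (R := ℚ) (A := ℂ) 2
    simpa using this
  have hcos : IsAlgebraic ℚ (Real.cos θ) := by
    apply real_alg_of_complex
    rw [Complex.ofReal_cos]
    have : Complex.cos θ = (z + z⁻¹) / 2 := by
      rw [Complex.cos, hexp_neg, hzdef]
    rw [this]
    exact myAlgDiv (myAlgAdd hzalg hzinv) h2alg
  have hsin : IsAlgebraic ℚ (Real.sin θ) := by
    apply real_alg_of_complex
    rw [Complex.ofReal_sin]
    have : Complex.sin θ = (z⁻¹ - z) * Complex.I / 2 := by
      rw [Complex.sin, hexp_neg, hzdef]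
    rw [this]
    exact myAlgDiv (myAlgMul (myAlgSub hzinv hzalg) hIalg) h2alg
  rw [Real.cot_eq_cos_div_sin]
  exact myAlgDiv hcos hsin

private lemma cot_pos_of (t b : ℕ) (h1 : 1 ≤ t) (h2 : 2 * t < b) :
    0 < Real.cot (Real.pi * t / b) := by
  have hb : (0 : ℝ) < b := by
    have : 0 < b := by omega
    exact_mod_cast this
  have ht : (1 : ℝ) ≤ t := by exact_mod_cast h1
  have h2' : (2 * t : ℝ) < b := by exact_mod_cast h2
  have hθpos : 0 < Real.pi * t / b := by
    apply div_pos _ hb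
    nlinarith [Real.pi_pos]
  have hθlt : Real.pi * t / b < Real.pi / 2 := by
    rw [div_lt_div_iff₀ hb two_pos]
    nlinarith [Real.pi_pos]
  rw [Real.cot_eq_cos_div_sin]
  apply div_pos
  · exact Real.cos_pos_of_mem_Ioo ⟨by nlinarith [Real.pi_pos], hθlt⟩
  · exact Real.sin_pos_of_pos_of_lt_pi hθpos (by nlinarith [Real.pi_pos])

theorem stmt_18 (q : ℝ) (hq : 1 < q) (hqalg : IsAlgebraic ℚ q)
    (b : ℕ) (hb : 3 ≤ b)
    (a a' : ℕ) (ha1 : 1 ≤ a) (ha2 : 2 * a < b) (hab : Nat.gcd a b = 1)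
    (ha'1 : 1 ≤ a') (ha'2 : 2 * a' < b) (ha'b : Nat.gcd a' b = 1) (hne : a ≠ a')
    (hOkada : ∀ (T : Finset ℕ),
      T = (Finset.range b).filter (fun t => 1 ≤ t ∧ 2 * t < b ∧ Nat.gcd t b = 1) →
      ∀ c : ℕ → ℚ, (∑ t ∈ T, (c t : ℝ) * Real.cot (Real.pi * t / b)) = 0 →
        ∀ t ∈ T, c t = 0)
    (hBaker : ∀ (c₀ c₁ α : ℝ), IsAlgebraic ℚ c₀ → c₀ ≠ 0 → IsAlgebraic ℚ c₁ →
      0 < α → IsAlgebraic ℚ α →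
      Transcendental ℚ (c₀ * Real.pi + c₁ * Real.log α)) :
    Irrational
      (((q - 1) / Real.log q * Real.pi * Real.cot (Real.pi * a / b)
          + (2 * q - 3) * (1 / 2 - (a : ℝ) / b)) /
        ((q - 1) / Real.log q * Real.pi * Real.cot (Real.pi * a' / b)
          + (2 * q - 3) * (1 / 2 - (a' : ℝ) / b))) := by
  have hbpos : 0 < b := by omega
  have hbR : (0 : ℝ) < b := by exact_mod_cast hbpos
  have hL : 0 < Real.log q := Real.log_pos hq
  have hLne : Real.log q ≠ 0 := ne_of_gt hL
  have hq1 : (0 : ℝ) < q - 1 := by linarith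
  set C : ℝ := Real.cot (Real.pi * a / b) with hC
  set C' : ℝ := Real.cot (Real.pi * a' / b) with hC'
  set D : ℝ := 1 / 2 - (a : ℝ) / b with hD
  set D' : ℝ := 1 / 2 - (a' : ℝ) / b with hD'
  have hCalg : IsAlgebraic ℚ C := cot_isAlgebraic a b hbpos
  have hC'alg : IsAlgebraic ℚ C' := cot_isAlgebraic a' b hbpos
  have hC'pos : 0 < C' := cot_pos_of a' b ha'1 ha'2
  have hDalg : IsAlgebraic ℚ D := by
    have : D = ((1 / 2 - (a : ℚ) / b : ℚ) : ℝ) := by rw [hD]; push_cast; ring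
    rw [this]; exact isAlgebraic_rat ℚ _
  have hD'alg : IsAlgebraic ℚ D' := by
    have : D' = ((1 / 2 - (a' : ℚ) / b : ℚ) : ℝ) := by rw [hD']; push_cast; ring
    rw [this]; exact isAlgebraic_rat ℚ _
  have hq3alg : IsAlgebraic ℚ (2 * q - 3) := by
    have h2 : IsAlgebraic ℚ (2 : ℝ) := by simpa using isAlgebraic_nat (R := ℚ) (A := ℝ) 2
    have h3 : IsAlgebraic ℚ (3 : ℝ) := by simpa using isAlgebraic_nat (R := ℚ) (A := ℝ) 3
    exact myAlgSub (myAlgMul h2 hqalg) h3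
  have hq1alg : IsAlgebraic ℚ (q - 1) := myAlgSub hqalg isAlgebraic_one
  set X : ℝ := (q - 1) / Real.log q * Real.pi * C + (2 * q - 3) * D with hX
  set X' : ℝ := (q - 1) / Real.log q * Real.pi * C' + (2 * q - 3) * D' with hX'
  -- X' ≠ 0
  have hX'ne : X' ≠ 0 := by
    intro h0
    have hkey : (q - 1) * C' * Real.pi + (2 * q - 3) * D' * Real.log q = 0 := by
      have := congrArg (· * Real.log q) h0
      simp only [hX'] at this
      field_simp at this
      linarith [this]
    have := hBaker ((q - 1) * C') ((2 * q - 3) * D') q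
      (myAlgMul hq1alg hC'alg) (by positivity) (myAlgMul hq3alg hD'alg)
      (by linarith) hqalg
    rw [hkey] at this
    exact this isAlgebraic_zero
  rintro ⟨r, hr⟩
  have hXr : X = (r : ℝ) * X' := by
    rw [eq_div_iff hX'ne] at hr
    linarith [hr]
  have hralg : IsAlgebraic ℚ ((r : ℝ)) := isAlgebraic_rat ℚ r
  -- From Baker: (q-1)*(C - r*C') = 0
  have hCrel : C - (r : ℝ) * C' = 0 := by
    by_contra hne0
    have hc0ne : (q - 1) * (C - (r : ℝ) * C') ≠ 0 := by
      apply mul_ne_zero (ne_of_gt hq1) hne0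
    have hc0alg : IsAlgebraic ℚ ((q - 1) * (C - (r : ℝ) * C')) :=
      myAlgMul hq1alg (myAlgSub hCalg (myAlgMul hralg hC'alg))
    have hc1alg : IsAlgebraic ℚ ((2 * q - 3) * (D - (r : ℝ) * D')) :=
      myAlgMul hq3alg (myAlgSub hDalg (myAlgMul hralg hD'alg))
    have hB := hBaker ((q - 1) * (C - (r : ℝ) * C')) ((2 * q - 3) * (D - (r : ℝ) * D')) q
      hc0alg hc0ne hc1alg (by linarith) hqalg
    have hzero : (q - 1) * (C - (r : ℝ) * C') * Real.pi
        + (2 * q - 3) * (D - (r : ℝ) * D') * Real.log q = 0 := by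
      have h1 : X - (r : ℝ) * X' = 0 := by rw [hXr]; ring
      have h2 := congrArg (· * Real.log q) h1
      simp only [hX, hX'] at h2
      field_simp at h2
      nlinarith [h2]
    rw [hzero] at hB
    exact hB isAlgebraic_zero
  -- Okada
  set T : Finset ℕ := (Finset.range b).filter (fun t => 1 ≤ t ∧ 2 * t < b ∧ Nat.gcd t b = 1)
    with hT
  have haT : a ∈ T := by
    rw [hT, Finset.mem_filter, Finset.mem_range]
    exact ⟨by omega, ha1, ha2, hab⟩
  have ha'T : a' ∈ T := by
    rw [hT, Finset.mem_filter, Finset.mem_range]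
    exact ⟨by omega, ha'1, ha'2, ha'b⟩
  set c : ℕ → ℚ := fun t => if t = a then 1 else if t = a' then -r else 0 with hc
  have hsum : (∑ t ∈ T, (c t : ℝ) * Real.cot (Real.pi * t / b)) = 0 := by
    have hsub : ({a, a'} : Finset ℕ) ⊆ T := by
      intro t ht
      rcases Finset.mem_insert.mp ht with h | h
      · exact h ▸ haT
      · exact (Finset.mem_singleton.mp h) ▸ ha'T
    rw [← Finset.sum_subset hsub]
    · rw [Finset.sum_pair hne]
      have hca : c a = 1 := by simp [hc]
      have hca' : c a' = -r := by simp [hc, Ne.symm hne]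
      rw [hca, hca']
      push_cast
      rw [← hC, ← hC']
      linarith [hCrel]
    · intro t _ ht
      simp only [Finset.mem_insert, Finset.mem_singleton, not_or] at ht
      simp [hc, ht.1, ht.2]
  have := hOkada T hT c hsum a haT
  simp [hc] at this
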